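/- With the notation of the projective resolution P_• of B, the K-linear maps σ_{−1}(e) = e(), σ₀(s()) = ss⁻¹(η(s)), σ_n(s(g₁,…,g_n)) = ss⁻¹(η(s),g₁,…,g_n) form a contracting homotopy: ∂₀∘σ_{−1} = id_B and ∂_{n+1}∘σ_n + σ_{n−1}∘∂_n = id_{P_n} for all n ≥ 0. -/

import Mathlib

/-- A concrete model of Exel's inverse monoid `S(G)`: pairs `(E, g)` where `E` is a
finite subset of `G` containing `1` and `g`, with product `(E,g)(F,h) = (E ∪ gF, gh)`. -/
@[ext]
structure ExelS (G : Type*) [Group G] [DecidableEq G] where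
  carrier : Finset G
  elt : G
  one_mem : (1 : G) ∈ carrier
  elt_mem : elt ∈ carrier

namespace ExelS

variable {G : Type*} [Group G] [DecidableEq G]

instance : Mul (ExelS G) :=
  ⟨fun s t =>
    ⟨s.carrier ∪ t.carrier.image (s.elt * ·), s.elt * t.elt,
      Finset.mem_union_left _ s.one_mem,
      Finset.mem_union_right _ (Finset.mem_image_of_mem _ t.elt_mem)⟩⟩

instance : One (ExelS G) :=
  ⟨⟨{1}, 1, Finset.mem_singleton_self 1, Finset.mem_singleton_self 1⟩⟩

/-- The inverse in the inverse monoid `S(G)`. -/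
instance : Inv (ExelS G) :=
  ⟨fun s =>
    ⟨s.carrier.image (s.elt⁻¹ * ·), s.elt⁻¹,
      Finset.mem_image.2 ⟨s.elt, s.elt_mem, by simp⟩,
      Finset.mem_image.2 ⟨1, s.one_mem, by simp⟩⟩⟩

@[simp] lemma mul_carrier (s t : ExelS G) :
    (s * t).carrier = s.carrier ∪ t.carrier.image (s.elt * ·) := rfl

@[simp] lemma mul_elt (s t : ExelS G) : (s * t).elt = s.elt * t.elt := rfl

@[simp] lemma one_carrier : (1 : ExelS G).carrier = {1} := rfl

@[simp] lemma one_elt : (1 : ExelS G).elt = 1 := rfl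

@[simp] lemma inv_carrier (s : ExelS G) :
    s⁻¹.carrier = s.carrier.image (s.elt⁻¹ * ·) := rfl

@[simp] lemma inv_elt (s : ExelS G) : s⁻¹.elt = s.elt⁻¹ := rfl

instance : Monoid (ExelS G) where
  mul_assoc a b c := by
    ext x
    · simp only [mul_carrier, Finset.image_union, Finset.image_image, Finset.union_assoc,
        Finset.mem_union, Finset.mem_image, Function.comp]
      constructor <;> rintro (h | h | ⟨y, hy, rfl⟩) <;> simp_all [mul_assoc]
    · simp [mul_assoc]
  one_mul s := by
    ext x
    · simp only [mul_carrier, one_carrier, one_elt, one_mul, Finset.image_id']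
      constructor
      · intro h
        rcases Finset.mem_union.1 h with h | h
        · exact (Finset.mem_singleton.1 h) ▸ s.one_mem
        · exact h
      · exact fun h => Finset.mem_union_right _ h
    · simp
  mul_one s := by
    ext x
    · simp only [mul_carrier, one_carrier, Finset.image_singleton, mul_one]
      constructor
      · intro h
        rcases Finset.mem_union.1 h with h | h
        · exact h
        · exact (Finset.mem_singleton.1 h) ▸ s.elt_mem
      · exact fun h => Finset.mem_union_left _ h
    · simp

/-- The canonical generators `[g]` of Exel's monoid. -/
def br (g : G) : ExelS G := ⟨{1, g}, g, by simp, by simp⟩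

/-- The idempotents `e_g = [g][g⁻¹]`. -/
def eIdem (g : G) : ExelS G := br g * (br g⁻¹ : ExelS G)

end ExelS


namespace ExelS

variable {G : Type*} [Group G] [DecidableEq G]

/-- The idempotent `e_{(g₁,…,g_n)} = e_{g₁} e_{g₁g₂} ⋯ e_{g₁⋯g_n}` of `S(G)`. -/
def eTuple {n : ℕ} (g : Fin n → G) : ExelS G :=
  (List.ofFn fun i : Fin n => eIdem (Fin.partialProd g i.succ)).prod

lemma elt_eq_one_of_idem {e : ExelS G} (he : e * e = e) : e.elt = 1 := by
  have h : e.elt * e.elt = e.elt := congrArg ExelS.elt he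
  exact mul_eq_right.mp h

lemma idem_of_elt_eq_one {s : ExelS G} (h : s.elt = 1) : s * s = s := by
  ext x
  · simp [h]
  · simp [h]

lemma mul_inv_rev' (s t : ExelS G) : (s * t)⁻¹ = t⁻¹ * s⁻¹ := by
  ext x
  · simp only [inv_carrier, mul_carrier, inv_elt, mul_elt, Finset.image_union,
      Finset.image_image, Finset.mem_union, Finset.mem_image, Function.comp]
    constructor
    · rintro (⟨y, hy, rfl⟩ | ⟨y, hy, rfl⟩)
      · right; exact ⟨y, hy, by group⟩
      · left; exact ⟨y, hy, by group⟩
    · rintro (⟨y, hy, rfl⟩ | ⟨y, hy, rfl⟩)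
      · right; exact ⟨y, hy, by group⟩
      · left; exact ⟨y, hy, by group⟩
  · simp [mul_inv_rev]

/-- The idempotents of `S(G)`. -/
def Idem (G : Type*) [Group G] [DecidableEq G] : Type _ := {e : ExelS G // e * e = e}

/-- Conjugation of idempotents: `s · e = s e s⁻¹`. -/
def conjIdem (s : ExelS G) (e : Idem G) : Idem G :=
  ⟨s * e.1 * s⁻¹, idem_of_elt_eq_one (by
    simp [mul_elt, inv_elt, elt_eq_one_of_idem e.2])⟩

lemma conjIdem_one : conjIdem (1 : ExelS G) = id := by
  funext e
  apply Subtype.ext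
  show (1 : ExelS G) * e.1 * (1 : ExelS G)⁻¹ = e.1
  have h1 : ((1 : ExelS G))⁻¹ = 1 := by ext x <;> simp
  rw [h1, one_mul, mul_one]

lemma conjIdem_mul (s t : ExelS G) :
    conjIdem (s * t) = conjIdem s ∘ conjIdem t := by
  funext e
  apply Subtype.ext
  show (s * t) * e.1 * (s * t)⁻¹ = s * (t * e.1 * t⁻¹) * s⁻¹
  rw [mul_inv_rev']
  simp [mul_assoc]

end ExelS

noncomputable section

open ExelS MonoidAlgebra DirectSum

variable (K : Type*) [CommRing K] (G : Type*) [Group G] [DecidableEq G]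

/-- `B = K·E(S(G))`, the `K`-span of the idempotents of `S(G)`. -/
def Bmod : Type _ := Idem G →₀ K

instance : AddCommGroup (Bmod K G) := by unfold Bmod; infer_instance
instance : Module K (Bmod K G) := by unfold Bmod; infer_instance

/-- The conjugation representation of `S(G)` on `B`. -/
def rhoB : ExelS G →* Module.End K (Bmod K G) where
  toFun s := Finsupp.lmapDomain K K (conjIdem s)
  map_one' := by
    show Finsupp.lmapDomain K K (conjIdem (1 : ExelS G)) = 1
    rw [conjIdem_one, Finsupp.lmapDomain_id]
    rfl
  map_mul' s t := by
    show Finsupp.lmapDomain K K (conjIdem (s * t)) = _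
    rw [conjIdem_mul]
    exact (Finsupp.lmapDomain_comp K K (conjIdem t) (conjIdem s) : _)

/-- The `K_par(G)`-module structure on `B` induced by `s·e = ses⁻¹`. -/
instance : Module (MonoidAlgebra K (ExelS G)) (Bmod K G) :=
  Module.compHom _ ((MonoidAlgebra.lift K (Module.End K (Bmod K G)) (ExelS G)) (rhoB K G)).toRingHom

/-- The `n`-th term `P_n = ⊕_{g₁,…,g_n ∈ G} K_par(G)·e_{(g₁,…,g_n)}` of the resolution. -/
def Pmod (n : ℕ) : Type _ :=
  ⨁ (v : Fin n → G), ↥(LinearMap.range (LinearMap.toSpanSingleton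
    (MonoidAlgebra K (ExelS G)) (MonoidAlgebra K (ExelS G)) (of K (ExelS G) (eTuple v))))

instance (n : ℕ) : AddCommGroup (Pmod K G n) := by unfold Pmod; infer_instance
instance (n : ℕ) : Module (MonoidAlgebra K (ExelS G)) (Pmod K G n) := by
  unfold Pmod; infer_instance
instance (n : ℕ) : Module K (Pmod K G n) := by unfold Pmod; infer_instance

/-- The augmentation `∂₀ : P₀ → B`, `s() ↦ ss⁻¹` (i.e. `x ↦ x • (1 ∈ E(S(G)))`). -/
def bdry0 : Pmod K G 0 →ₗ[MonoidAlgebra K (ExelS G)] Bmod K G :=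
  DirectSum.toModule _ _ _ fun _v =>
    (LinearMap.toSpanSingleton (MonoidAlgebra K (ExelS G)) (Bmod K G)
      (Finsupp.single ⟨1, one_mul 1⟩ 1)).comp (Submodule.subtype _)

/-- The target element `[g₁](g₂,…,g_{n+1}) + Σ_{i=1}^{n}(−1)^i(…glued…) +
(−1)^{n+1}(g₁,…,g_n)` of `P_n` associated to the basis element of index
`(g₁,…,g_{n+1})` in `P_{n+1}`.  (The summand `j = n` of the sum below is the last term.) -/
def bdryTarget (n : ℕ) (v : Fin (n + 1) → G) : Pmod K G n :=
  (DirectSum.lof (MonoidAlgebra K (ExelS G)) _ _ (Fin.tail v)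
      ⟨of K (ExelS G) (br (v 0)) * of K (ExelS G) (eTuple (Fin.tail v)),
        ⟨of K (ExelS G) (br (v 0)), by simp [LinearMap.toSpanSingleton_apply, smul_eq_mul]⟩⟩ :
          Pmod K G n) +
    ∑ j : Fin (n + 1), (-1 : ℤ) ^ ((j : ℕ) + 1) •
      (DirectSum.lof (MonoidAlgebra K (ExelS G)) _ _ (Fin.contractNth j (· * ·) v)
        ⟨of K (ExelS G) (eTuple (Fin.contractNth j (· * ·) v)),
          ⟨1, by simp [LinearMap.toSpanSingleton_apply]⟩⟩ : Pmod K G n)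

/-- The boundary maps `∂_{n+1} : P_{n+1} → P_n` of the resolution. -/
def bdry (n : ℕ) : Pmod K G (n + 1) →ₗ[MonoidAlgebra K (ExelS G)] Pmod K G n :=
  DirectSum.toModule _ _ _ fun v =>
    (LinearMap.toSpanSingleton (MonoidAlgebra K (ExelS G)) (Pmod K G n)
      (bdryTarget K G n v)).comp (Submodule.subtype _)

end

noncomputable section

open ExelS MonoidAlgebra DirectSum

variable (K : Type*) [CommRing K] (G : Type*) [Group G] [DecidableEq G]

/-- The contracting homotopy `σ₋₁ : B → P₀`, `e ↦ e()`. -/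
def sigmaNeg : Bmod K G →ₗ[K] Pmod K G 0 :=
  Finsupp.lift (Pmod K G 0) K (Idem G) fun e =>
    DirectSum.lof (MonoidAlgebra K (ExelS G)) _ _ (Fin.elim0 : Fin 0 → G)
      ⟨of K (ExelS G) e.1 * of K (ExelS G) (eTuple (Fin.elim0 : Fin 0 → G)),
        ⟨of K (ExelS G) e.1, by simp [LinearMap.toSpanSingleton_apply, smul_eq_mul]⟩⟩

/-- The value of `σ_n` on the basis element `t(g₁,…,g_n)`:
`σ_n(t(g₁,…,g_n)) = tt⁻¹(η(t),g₁,…,g_n)`. -/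
def sigmaF (n : ℕ) (v : Fin n → G) : ExelS G → Pmod K G (n + 1) := fun t =>
  DirectSum.lof (MonoidAlgebra K (ExelS G)) _ _ (Fin.cons t.elt v)
    ⟨of K (ExelS G) (t * t⁻¹) * of K (ExelS G) (eTuple (Fin.cons t.elt v)),
      ⟨of K (ExelS G) (t * t⁻¹), by simp [LinearMap.toSpanSingleton_apply, smul_eq_mul]⟩⟩

/-- The contracting homotopy `σ_n : P_n → P_{n+1}` (a `K`-linear map). -/
def sigmaMap (n : ℕ) : Pmod K G n →ₗ[K] Pmod K G (n + 1) :=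
  DirectSum.toModule K _ _ fun v =>
    (Finsupp.lift (Pmod K G (n + 1)) K (ExelS G) (sigmaF K G n v)).comp
      ((coeffLinearEquiv K).toLinearMap.comp ((Submodule.subtype _).restrictScalars K))

namespace ExelS

variable {G : Type*} [Group G] [DecidableEq G]

/-- Absorption: if `f` is "idempotent-shaped" and `s.elt • f.carrier ⊆ s.carrier`
then `s * f = s`. -/
lemma mul_absorb {s f : ExelS G} (hf : f.elt = 1)
    (h : ∀ x ∈ f.carrier, s.elt * x ∈ s.carrier) : s * f = s := by
  ext x
  · simp only [mul_carrier, Finset.mem_union, Finset.mem_image]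
    constructor
    · rintro (hx | ⟨y, hy, rfl⟩)
      · exact hx
      · exact h y hy
    · exact fun hx => Or.inl hx
  · simp [hf]

lemma absorb_of_mul_eq {s f : ExelS G} (h : s * f = s) :
    ∀ x ∈ f.carrier, s.elt * x ∈ s.carrier := by
  intro x hx
  have hc : (s * f).carrier = s.carrier := congrArg carrier h
  rw [← hc]
  simp only [mul_carrier, Finset.mem_union, Finset.mem_image]
  exact Or.inr ⟨x, hx, rfl⟩

lemma mul_inv_self (s : ExelS G) : s * s⁻¹ = ⟨s.carrier, 1, s.one_mem, s.one_mem⟩ := by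
  ext x
  · simp [Finset.image_image, Function.comp_def]
  · simp

lemma eIdem_eq (g : G) : eIdem g = ⟨{1, g}, 1, by simp, by simp⟩ := by
  ext x
  · simp only [eIdem, br, mul_carrier, Finset.mem_union, Finset.mem_image,
      Finset.mem_insert, Finset.mem_singleton]
    constructor
    · rintro (h | ⟨y, hy, rfl⟩)
      · exact h
      · rcases hy with rfl | rfl
        · right; exact (mul_one g).symm ▸ rfl
        · left; simp
    · rintro (rfl | rfl)
      · exact Or.inl (Or.inl rfl)
      · exact Or.inl (Or.inr rfl)
  · simp [eIdem, br]

lemma elt_list_prod (l : List (ExelS G)) (h : ∀ s ∈ l, s.elt = 1) : l.prod.elt = 1 := by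
  induction l with
  | nil => rfl
  | cons a l ih =>
    rw [List.prod_cons, mul_elt, h a List.mem_cons_self,
      ih fun s hs => h s (List.mem_cons_of_mem a hs), one_mul]

lemma mem_list_prod_carrier (l : List (ExelS G)) (h : ∀ s ∈ l, s.elt = 1) (x : G) :
    x ∈ l.prod.carrier ↔ x = 1 ∨ ∃ s ∈ l, x ∈ s.carrier := by
  induction l with
  | nil => simp [List.prod_nil]
  | cons a l ih =>
    rw [List.prod_cons, mul_carrier, h a List.mem_cons_self]
    simp only [one_mul, Finset.image_id', Finset.mem_union,
      ih fun s hs => h s (List.mem_cons_of_mem a hs), List.mem_cons]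
    constructor
    · rintro (hx | hx | ⟨s, hs, hx⟩)
      · exact Or.inr ⟨a, Or.inl rfl, hx⟩
      · exact Or.inl hx
      · exact Or.inr ⟨s, Or.inr hs, hx⟩
    · rintro (hx | ⟨s, rfl | hs, hx⟩)
      · exact Or.inr (Or.inl hx)
      · exact Or.inl hx
      · exact Or.inr (Or.inr ⟨s, hs, hx⟩)

lemma elt_eTuple {n : ℕ} (v : Fin n → G) : (eTuple v).elt = 1 :=
  elt_list_prod _ (by
    intro s hs
    rw [List.mem_ofFn] at hs
    obtain ⟨i, rfl⟩ := hs
    simp only [eIdem_eq])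

lemma mem_eTuple_carrier {n : ℕ} (v : Fin n → G) (x : G) :
    x ∈ (eTuple v).carrier ↔ ∃ i : Fin (n + 1), Fin.partialProd v i = x := by
  rw [eTuple, mem_list_prod_carrier _ (by
    intro s hs
    rw [List.mem_ofFn] at hs
    obtain ⟨i, rfl⟩ := hs
    simp only [eIdem_eq])]
  constructor
  · rintro (rfl | ⟨s, hs, hx⟩)
    · exact ⟨0, Fin.partialProd_zero v⟩
    · rw [List.mem_ofFn] at hs
      obtain ⟨i, rfl⟩ := hs
      simp only [eIdem_eq] at hx
      simp only [Finset.mem_insert, Finset.mem_singleton] at hx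
      rcases hx with rfl | rfl
      · exact ⟨0, Fin.partialProd_zero v⟩
      · exact ⟨i.succ, rfl⟩
  · rintro ⟨i, rfl⟩
    induction i using Fin.cases with
    | zero => exact Or.inl (Fin.partialProd_zero v)
    | succ i =>
      refine Or.inr ⟨eIdem (Fin.partialProd v i.succ), ?_, ?_⟩
      · rw [List.mem_ofFn]; exact ⟨i, rfl⟩
      · simp only [eIdem_eq]; simp

lemma eTuple_idem {n : ℕ} (v : Fin n → G) : eTuple v * eTuple v = eTuple v :=
  idem_of_elt_eq_one (elt_eTuple v)

lemma mul_inv_br (t : ExelS G) : t * t⁻¹ * br t.elt = t := by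
  rw [mul_inv_self]
  ext x
  · simp only [mul_carrier, br, one_mul, Finset.mem_union, Finset.mem_image,
      Finset.mem_insert, Finset.mem_singleton]
    constructor
    · rintro (hx | ⟨y, rfl | rfl, rfl⟩)
      · exact hx
      · exact t.one_mem
      · exact t.elt_mem
    · exact fun hx => Or.inl hx
  · simp [br]

end ExelS

section FinLemmas

variable {M : Type*} [Monoid M] {n : ℕ}

lemma partialProd_contractNth (j : Fin (n + 1)) (v : Fin (n + 1) → M) (i : Fin (n + 1)) :
    Fin.partialProd (Fin.contractNth j (· * ·) v) i =
      if (i : ℕ) ≤ (j : ℕ) then Fin.partialProd v (Fin.castSucc i)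
      else Fin.partialProd v i.succ := by
  induction i using Fin.induction with
  | zero => simp
  | succ i ih =>
    rw [Fin.partialProd_succ, ih]
    rcases lt_trichotomy (i : ℕ) (j : ℕ) with h | h | h
    · rw [if_pos (by simpa using h.le), if_pos (by simpa [Nat.succ_le_iff] using h),
        Fin.contractNth_apply_of_lt _ _ _ _ (by simpa using h),
        ← Fin.partialProd_succ, Fin.succ_castSucc]
    · rw [if_pos (by simpa using h.le), if_neg (by simp [h]),
        Fin.contractNth_apply_of_eq _ _ _ _ (by simpa using h),
        ← mul_assoc, ← Fin.partialProd_succ, Fin.succ_castSucc, ← Fin.partialProd_succ]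
    · rw [if_neg (by simpa using Nat.not_le.mpr h), if_neg (by simp; omega),
        Fin.contractNth_apply_of_gt _ _ _ _ (by simpa using h),
        Fin.succ_castSucc, ← Fin.partialProd_succ]

end FinLemmas

section FinLemmas2

variable {M : Type*} {n : ℕ}

lemma contractNth_zero_cons (op : M → M → M) (g : M) (v : Fin (n + 1) → M) :
    Fin.contractNth 0 op (Fin.cons g v) = Fin.cons (op g (v 0)) (Fin.tail v) := by
  funext k
  induction k using Fin.cases with
  | zero =>
    rw [Fin.contractNth_apply_of_eq _ _ _ _ rfl]
    simp [Fin.cons_zero, Fin.cons_succ]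
  | succ k =>
    rw [Fin.contractNth_apply_of_gt _ _ _ _ (by simp)]
    simp [Fin.cons_succ, Fin.tail]

lemma contractNth_succ_cons (op : M → M → M) (j : Fin (n + 1)) (g : M) (v : Fin (n + 1) → M) :
    Fin.contractNth j.succ op (Fin.cons g v) = Fin.cons g (Fin.contractNth j op v) := by
  funext k
  induction k using Fin.cases with
  | zero =>
    rw [Fin.contractNth_apply_of_lt _ _ _ _ (by simp)]
    simp
  | succ k =>
    rcases lt_trichotomy (k : ℕ) (j : ℕ) with h | h | h
    · conv_rhs => rw [Fin.cons_succ, Fin.contractNth_apply_of_lt _ _ _ _ h]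
      rw [Fin.contractNth_apply_of_lt _ _ _ _ (by simpa using h), ← Fin.succ_castSucc,
        Fin.cons_succ]
    · conv_rhs => rw [Fin.cons_succ, Fin.contractNth_apply_of_eq _ _ _ _ h]
      rw [Fin.contractNth_apply_of_eq _ _ _ _ (by simpa using h), ← Fin.succ_castSucc,
        Fin.cons_succ, Fin.cons_succ]
    · conv_rhs => rw [Fin.cons_succ, Fin.contractNth_apply_of_gt _ _ _ _ h]
      rw [Fin.contractNth_apply_of_gt _ _ _ _ (by simpa using h), Fin.cons_succ]

end FinLemmas2

namespace ExelS

variable {G : Type*} [Group G] [DecidableEq G] {n : ℕ}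

/-- The standing hypothesis on a generator `t = s e_v` of `P_n` at index `v`. -/
def Compat (t : ExelS G) (v : Fin n → G) : Prop :=
  ∀ i : Fin (n + 1), t.elt * Fin.partialProd v i ∈ t.carrier

lemma compat_of_mul_eTuple (s : ExelS G) (v : Fin n → G) :
    Compat (s * eTuple v) v := by
  intro i
  have h : (s * eTuple v) * eTuple v = s * eTuple v := by
    rw [mul_assoc, eTuple_idem]
  exact absorb_of_mul_eq h _ ((mem_eTuple_carrier v _).2 ⟨i, rfl⟩)

variable {t : ExelS G} {v : Fin n → G}

lemma Compat.mul_eTuple (ht : Compat t v) : t * eTuple v = t := by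
  refine mul_absorb (elt_eTuple v) fun x hx => ?_
  obtain ⟨i, rfl⟩ := (mem_eTuple_carrier v x).1 hx
  exact ht i

lemma Compat.invMul_mul_eTuple_cons (ht : Compat t v) :
    t * t⁻¹ * eTuple (Fin.cons t.elt v) = t * t⁻¹ := by
  refine mul_absorb (elt_eTuple _) fun x hx => ?_
  obtain ⟨i, rfl⟩ := (mem_eTuple_carrier _ x).1 hx
  rw [mul_inv_self]
  show (1 : G) * _ ∈ t.carrier
  rw [one_mul]
  induction i using Fin.cases with
  | zero => rw [Fin.partialProd_zero]; exact t.one_mem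
  | succ i =>
    rw [Fin.partialProd_succ', Fin.cons_zero, Fin.tail_cons]
    exact ht i

/-- `tt⁻¹ · e_{contract_j (cons g₀ v)} = tt⁻¹`. -/
lemma Compat.invMul_mul_eTuple_contract (ht : Compat t v) (j : Fin (n + 1)) :
    t * t⁻¹ * eTuple (Fin.contractNth j (· * ·) (Fin.cons t.elt v)) = t * t⁻¹ := by
  refine mul_absorb (elt_eTuple _) fun x hx => ?_
  obtain ⟨i, rfl⟩ := (mem_eTuple_carrier _ x).1 hx
  rw [mul_inv_self]
  show (1 : G) * _ ∈ t.carrier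
  rw [one_mul, partialProd_contractNth]
  have key : ∀ m : Fin (n + 2), Fin.partialProd (Fin.cons t.elt v) m ∈ t.carrier := by
    intro m
    induction m using Fin.cases with
    | zero => rw [Fin.partialProd_zero]; exact t.one_mem
    | succ m =>
      rw [Fin.partialProd_succ', Fin.cons_zero, Fin.tail_cons]
      exact ht m
  split <;> apply key

/-- `t · e_{contract_j v} = t` for `v` of length `n+1`. -/
lemma Compat.mul_eTuple_contract {v : Fin (n + 1) → G} (ht : Compat t v) (j : Fin (n + 1)) :
    t * eTuple (Fin.contractNth j (· * ·) v) = t := by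
  refine mul_absorb (elt_eTuple _) fun x hx => ?_
  obtain ⟨i, rfl⟩ := (mem_eTuple_carrier _ x).1 hx
  rw [partialProd_contractNth]
  split <;> apply ht

lemma Compat.decomp (ht : Compat t v) : t * t⁻¹ * br t.elt * eTuple v = t := by
  rw [mul_inv_br]
  exact ht.mul_eTuple

/-- For `u₁ = t [v 0] e_{tail v}` (with `v` of length `n+1`): `u₁ u₁⁻¹ = t t⁻¹`. -/
lemma Compat.aux_u1 {v : Fin (n + 1) → G} (ht : Compat t v) :
    (t * br (v 0) * eTuple (Fin.tail v)) * (t * br (v 0) * eTuple (Fin.tail v))⁻¹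
      = t * t⁻¹ := by
  have hpp1 : Fin.partialProd v 1 = v 0 := by
    rw [show (1 : Fin (n + 2)) = Fin.succ 0 from rfl, Fin.partialProd_succ]
    simp
  have hcar : (t * br (v 0) * eTuple (Fin.tail v)).carrier = t.carrier := by
    refine Finset.Subset.antisymm ?_ fun x hx =>
      Finset.mem_union_left _ (Finset.mem_union_left _ hx)
    intro x hx
    simp only [mul_carrier, mul_elt, br, Finset.mem_union, Finset.mem_image,
      Finset.mem_insert, Finset.mem_singleton] at hx
    rcases hx with (hx | ⟨y, hy, rfl⟩) | ⟨y, hy, rfl⟩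
    · exact hx
    · rcases hy with rfl | rfl
      · rw [mul_one]; exact t.elt_mem
      · have := ht 1
        rwa [hpp1] at this
    · obtain ⟨i, rfl⟩ := (mem_eTuple_carrier _ y).1 hy
      show t.elt * (br (v 0)).elt * _ ∈ t.carrier
      have hbr : (br (v 0)).elt = v 0 := rfl
      rw [hbr, mul_assoc, ← Fin.partialProd_succ']
      exact ht i.succ
  rw [mul_inv_self, mul_inv_self, ExelS.ext_iff]
  exact ⟨hcar, rfl⟩

end ExelS

noncomputable section

open ExelS MonoidAlgebra DirectSum

variable (K : Type*) [CommRing K] (G : Type*) [Group G] [DecidableEq G]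

lemma smul_Bmod_def (x : MonoidAlgebra K (ExelS G)) (b : Bmod K G) :
    x • b = ((MonoidAlgebra.lift K (Module.End K (Bmod K G)) (ExelS G)) (rhoB K G)) x b := rfl

lemma single_smul_Bmod (s : ExelS G) (k : K) (b : Bmod K G) :
    (MonoidAlgebra.single s k : MonoidAlgebra K (ExelS G)) • b
      = k • Finsupp.mapDomain (conjIdem s) b := by
  rw [smul_Bmod_def, MonoidAlgebra.lift_single]
  rfl

instance : IsScalarTower K (MonoidAlgebra K (ExelS G)) (Bmod K G) := by
  constructor
  intro k x b
  rw [smul_Bmod_def, smul_Bmod_def, map_smul]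
  rfl

instance (n : ℕ) : IsScalarTower K (MonoidAlgebra K (ExelS G)) (Pmod K G n) := by
  unfold Pmod; infer_instance

/-- The generators of `P_n` as a `K`-module. -/
def gen (n : ℕ) (v : Fin n → G) (s : ExelS G) : Pmod K G n :=
  DirectSum.lof (MonoidAlgebra K (ExelS G)) _ _ v
    ⟨of K (ExelS G) s * of K (ExelS G) (eTuple v),
      ⟨of K (ExelS G) s, by simp [LinearMap.toSpanSingleton_apply, smul_eq_mul]⟩⟩

lemma of_mem_span (n : ℕ) (v : Fin n → G) (a : MonoidAlgebra K (ExelS G)) :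
    ∀ hm : a * of K (ExelS G) (eTuple v) ∈ LinearMap.range (LinearMap.toSpanSingleton
      (MonoidAlgebra K (ExelS G)) (MonoidAlgebra K (ExelS G)) (of K (ExelS G) (eTuple v))),
    DirectSum.of (fun w : Fin n → G => ↥(LinearMap.range (LinearMap.toSpanSingleton
        (MonoidAlgebra K (ExelS G)) (MonoidAlgebra K (ExelS G)) (of K (ExelS G) (eTuple w)))))
        v ⟨a * of K (ExelS G) (eTuple v), hm⟩ ∈
      Submodule.span K (Set.range fun p : (Fin n → G) × ExelS G => gen K G n p.1 p.2) := by
  induction a using MonoidAlgebra.induction_on with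
  | of s =>
    intro hm
    rw [← DirectSum.lof_eq_of (MonoidAlgebra K (ExelS G))]
    exact Submodule.subset_span ⟨(v, s), rfl⟩
  | add f g hf hg =>
    intro hm
    have hfm : f * of K (ExelS G) (eTuple v) ∈ LinearMap.range (LinearMap.toSpanSingleton
      (MonoidAlgebra K (ExelS G)) (MonoidAlgebra K (ExelS G)) (of K (ExelS G) (eTuple v))) :=
      ⟨f, by simp [LinearMap.toSpanSingleton_apply, smul_eq_mul]⟩
    have hgm : g * of K (ExelS G) (eTuple v) ∈ LinearMap.range (LinearMap.toSpanSingleton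
      (MonoidAlgebra K (ExelS G)) (MonoidAlgebra K (ExelS G)) (of K (ExelS G) (eTuple v))) :=
      ⟨g, by simp [LinearMap.toSpanSingleton_apply, smul_eq_mul]⟩
    have hsum : (⟨(f + g) * of K (ExelS G) (eTuple v), hm⟩ : ↥(LinearMap.range (LinearMap.toSpanSingleton
        (MonoidAlgebra K (ExelS G)) (MonoidAlgebra K (ExelS G)) (of K (ExelS G) (eTuple v)))))
        = ⟨f * of K (ExelS G) (eTuple v), hfm⟩ + ⟨g * of K (ExelS G) (eTuple v), hgm⟩ :=
      Subtype.ext (add_mul _ _ _)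
    rw [hsum, map_add]
    exact Submodule.add_mem _ (hf hfm) (hg hgm)
  | smul r f hf =>
    intro hm
    have hfm : f * of K (ExelS G) (eTuple v) ∈ LinearMap.range (LinearMap.toSpanSingleton
      (MonoidAlgebra K (ExelS G)) (MonoidAlgebra K (ExelS G)) (of K (ExelS G) (eTuple v))) :=
      ⟨f, by simp [LinearMap.toSpanSingleton_apply, smul_eq_mul]⟩
    have hs : (⟨(r • f) * of K (ExelS G) (eTuple v), hm⟩ : ↥(LinearMap.range (LinearMap.toSpanSingleton
        (MonoidAlgebra K (ExelS G)) (MonoidAlgebra K (ExelS G)) (of K (ExelS G) (eTuple v)))))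
        = r • ⟨f * of K (ExelS G) (eTuple v), hfm⟩ :=
      Subtype.ext (smul_mul_assoc r _ _)
    rw [hs, ← DirectSum.lof_eq_of K, map_smul, DirectSum.lof_eq_of]
    exact Submodule.smul_mem _ _ (hf hfm)

lemma gen_span (n : ℕ) :
    Submodule.span K (Set.range fun p : (Fin n → G) × ExelS G => gen K G n p.1 p.2) = ⊤ := by
  rw [eq_top_iff]
  rintro x -
  induction x using DirectSum.induction_on with
  | zero => exact Submodule.zero_mem _
  | of v y =>
    obtain ⟨z, hz⟩ := y
    obtain ⟨a, ha⟩ := hz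
    rw [LinearMap.toSpanSingleton_apply, smul_eq_mul] at ha
    have hmem : a * of K (ExelS G) (eTuple v) ∈ LinearMap.range (LinearMap.toSpanSingleton
      (MonoidAlgebra K (ExelS G)) (MonoidAlgebra K (ExelS G)) (of K (ExelS G) (eTuple v))) :=
      ⟨a, by simp [LinearMap.toSpanSingleton_apply, smul_eq_mul]⟩
    have hrw : (⟨z, ⟨a, by rw [← ha, LinearMap.toSpanSingleton_apply, smul_eq_mul]⟩⟩ : ↥(LinearMap.range (LinearMap.toSpanSingleton
        (MonoidAlgebra K (ExelS G)) (MonoidAlgebra K (ExelS G)) (of K (ExelS G) (eTuple v)))))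
        = ⟨a * of K (ExelS G) (eTuple v), hmem⟩ := Subtype.ext ha.symm
    rw [hrw]
    exact of_mem_span K G n v a hmem
  | add x y hx hy => exact Submodule.add_mem _ hx hy

end

noncomputable section

open ExelS MonoidAlgebra DirectSum

variable (K : Type*) [CommRing K] (G : Type*) [Group G] [DecidableEq G]

/-- The generator of `B`. -/
def oneB : Bmod K G := Finsupp.single (⟨1, one_mul 1⟩ : Idem G) (1 : K)

lemma bdry0_apply (v : Fin 0 → G) (x : MonoidAlgebra K (ExelS G))
    (h : x ∈ LinearMap.range (LinearMap.toSpanSingleton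
      (MonoidAlgebra K (ExelS G)) (MonoidAlgebra K (ExelS G)) (of K (ExelS G) (eTuple v)))) :
    bdry0 K G (DirectSum.lof (MonoidAlgebra K (ExelS G)) _ _ v ⟨x, h⟩)
      = x • oneB K G := by
  unfold bdry0
  erw [DirectSum.toModule_lof]
  rfl

lemma bdry_apply (n : ℕ) (v : Fin (n + 1) → G) (x : MonoidAlgebra K (ExelS G))
    (h : x ∈ LinearMap.range (LinearMap.toSpanSingleton
      (MonoidAlgebra K (ExelS G)) (MonoidAlgebra K (ExelS G)) (of K (ExelS G) (eTuple v)))) :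
    bdry K G n (DirectSum.lof (MonoidAlgebra K (ExelS G)) _ _ v ⟨x, h⟩)
      = x • bdryTarget K G n v := by
  unfold bdry
  erw [DirectSum.toModule_lof]
  rfl

lemma sigmaMap_apply (n : ℕ) (v : Fin n → G) (u : ExelS G)
    (h : of K (ExelS G) u ∈ LinearMap.range (LinearMap.toSpanSingleton
      (MonoidAlgebra K (ExelS G)) (MonoidAlgebra K (ExelS G)) (of K (ExelS G) (eTuple v)))) :
    sigmaMap K G n (DirectSum.lof (MonoidAlgebra K (ExelS G)) _ _ v ⟨of K (ExelS G) u, h⟩)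
      = sigmaF K G n v u := by
  unfold sigmaMap
  rw [DirectSum.lof_eq_of, ← DirectSum.lof_eq_of K]
  erw [DirectSum.toModule_lof]
  show Finsupp.lift (Pmod K G (n + 1)) K (ExelS G) (sigmaF K G n v) (Finsupp.single u 1) = _
  erw [Finsupp.lift_apply]
  rw [Finsupp.sum_single_index (by rw [zero_smul]), one_smul]

lemma sigmaNeg_apply (e : Idem G) (k : K) :
    sigmaNeg K G (Finsupp.single e k)
      = k • (DirectSum.lof (MonoidAlgebra K (ExelS G)) _ _ (Fin.elim0 : Fin 0 → G)
          ⟨of K (ExelS G) e.1 * of K (ExelS G) (eTuple (Fin.elim0 : Fin 0 → G)),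
            ⟨of K (ExelS G) e.1, by simp [LinearMap.toSpanSingleton_apply, smul_eq_mul]⟩⟩ :
              Pmod K G 0) := by
  unfold sigmaNeg
  erw [Finsupp.lift_apply]
  rw [Finsupp.sum_single_index (by exact zero_smul _ _)]
  rfl

lemma smul_lof_mk (n : ℕ) (v : Fin n → G) (x a : MonoidAlgebra K (ExelS G))
    (h : a ∈ LinearMap.range (LinearMap.toSpanSingleton
      (MonoidAlgebra K (ExelS G)) (MonoidAlgebra K (ExelS G)) (of K (ExelS G) (eTuple v))))
    (h2 : x * a ∈ LinearMap.range (LinearMap.toSpanSingleton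
      (MonoidAlgebra K (ExelS G)) (MonoidAlgebra K (ExelS G)) (of K (ExelS G) (eTuple v)))) :
    x • DirectSum.lof (MonoidAlgebra K (ExelS G)) (Fin n → G) (fun w : Fin n → G => ↥(LinearMap.range (LinearMap.toSpanSingleton
      (MonoidAlgebra K (ExelS G)) (MonoidAlgebra K (ExelS G)) (of K (ExelS G) (eTuple w))))) v ⟨a, h⟩
      = DirectSum.lof (MonoidAlgebra K (ExelS G)) (Fin n → G) (fun w : Fin n → G => ↥(LinearMap.range (LinearMap.toSpanSingleton
      (MonoidAlgebra K (ExelS G)) (MonoidAlgebra K (ExelS G)) (of K (ExelS G) (eTuple w))))) v ⟨x * a, h2⟩ := by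
  rw [← map_smul]
  congr 1

lemma smul_zsmul_comm {M : Type*} [AddCommGroup M] [Module (MonoidAlgebra K (ExelS G)) M]
    (x : MonoidAlgebra K (ExelS G)) (z : ℤ) (m : M) :
    x • (z • m) = z • (x • m) :=
  map_zsmul (DistribSMul.toAddMonoidHom M x) z m

end

noncomputable section

open ExelS MonoidAlgebra DirectSum

variable (K : Type*) [CommRing K] (G : Type*) [Group G] [DecidableEq G]

lemma br_elt (g : G) : (br g).elt = g := rfl

lemma elt_mul_br_eTuple {n : ℕ} (t : ExelS G) (g : G) (w : Fin n → G) :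
    (t * br g * eTuple w).elt = t.elt * g := by
  rw [mul_elt, mul_elt, elt_eTuple, mul_one, br_elt]

/-- A canonical copy of `lof w ⟨of u, _⟩` for `u` absorbed by `e_w`. -/
def genOf (n : ℕ) (w : Fin n → G) (u : ExelS G) (h : u * eTuple w = u) : Pmod K G n :=
  DirectSum.lof (MonoidAlgebra K (ExelS G)) (Fin n → G)
    (fun x : Fin n → G => ↥(LinearMap.range (LinearMap.toSpanSingleton
      (MonoidAlgebra K (ExelS G)) (MonoidAlgebra K (ExelS G)) (of K (ExelS G) (eTuple x)))))
    w ⟨of K (ExelS G) u,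
      ⟨of K (ExelS G) u, by
        rw [LinearMap.toSpanSingleton_apply, smul_eq_mul, ← map_mul, h]⟩⟩

/-- Canonical generator with an explicit product value. -/
def genMul (n : ℕ) (w : Fin n → G) (a : ExelS G) : Pmod K G n :=
  genOf K G n w (a * eTuple w) (by rw [mul_assoc, eTuple_idem])

lemma lof_congr₂ {n : ℕ} {v w : Fin n → G} (hvw : v = w) {x y : MonoidAlgebra K (ExelS G)}
    {hx : x ∈ LinearMap.range (LinearMap.toSpanSingleton
      (MonoidAlgebra K (ExelS G)) (MonoidAlgebra K (ExelS G)) (of K (ExelS G) (eTuple v)))}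
    {hy : y ∈ LinearMap.range (LinearMap.toSpanSingleton
      (MonoidAlgebra K (ExelS G)) (MonoidAlgebra K (ExelS G)) (of K (ExelS G) (eTuple w)))}
    (hxy : x = y) :
    DirectSum.lof (MonoidAlgebra K (ExelS G)) (Fin n → G)
      (fun x : Fin n → G => ↥(LinearMap.range (LinearMap.toSpanSingleton
        (MonoidAlgebra K (ExelS G)) (MonoidAlgebra K (ExelS G)) (of K (ExelS G) (eTuple x)))))
      v ⟨x, hx⟩
      = DirectSum.lof (MonoidAlgebra K (ExelS G)) (Fin n → G)
        (fun x : Fin n → G => ↥(LinearMap.range (LinearMap.toSpanSingleton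
          (MonoidAlgebra K (ExelS G)) (MonoidAlgebra K (ExelS G)) (of K (ExelS G) (eTuple x)))))
        w ⟨y, hy⟩ := by
  subst hvw
  subst hxy
  rfl

lemma genOf_congr {n : ℕ} {w : Fin n → G} {u u' : ExelS G} (h : u = u')
    {hu : u * eTuple w = u} {hu' : u' * eTuple w = u'} :
    genOf K G n w u hu = genOf K G n w u' hu' :=
  lof_congr₂ K G rfl (congrArg _ h)

lemma gen_eq_genOf (n : ℕ) (w : Fin n → G) (a : ExelS G) :
    gen K G n w a = genOf K G n w (a * eTuple w) (by rw [mul_assoc, eTuple_idem]) :=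
  lof_congr₂ K G rfl (map_mul (of K (ExelS G)) a (eTuple w)).symm

lemma genMul_eq_gen (n : ℕ) (w : Fin n → G) (a : ExelS G) :
    genMul K G n w a = gen K G n w a :=
  (gen_eq_genOf K G n w a).symm

lemma genMul_congr {n : ℕ} {w : Fin n → G} {a b : ExelS G}
    (h : a * eTuple w = b * eTuple w) :
    genMul K G n w a = genMul K G n w b :=
  genOf_congr K G h

lemma sigmaF_eq_gen (n : ℕ) (v : Fin n → G) (u : ExelS G) :
    sigmaF K G n v u = gen K G (n + 1) (Fin.cons u.elt v) (u * u⁻¹) := rfl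

lemma sigmaMap_genOf (n : ℕ) (v : Fin n → G) (u : ExelS G) (h : u * eTuple v = u) :
    sigmaMap K G n (genOf K G n v u h) = sigmaF K G n v u :=
  sigmaMap_apply K G n v u _

lemma bdry_genOf (n : ℕ) (v : Fin (n + 1) → G) (u : ExelS G) (h : u * eTuple v = u) :
    bdry K G n (genOf K G (n + 1) v u h) = of K (ExelS G) u • bdryTarget K G n v :=
  bdry_apply K G n v _ _

lemma bdry0_genOf (v : Fin 0 → G) (u : ExelS G) (h : u * eTuple v = u) :
    bdry0 K G (genOf K G 0 v u h) = of K (ExelS G) u • oneB K G :=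
  bdry0_apply K G v _ _

lemma smul_lof_mk' (n : ℕ) (v : Fin n → G) (x a : MonoidAlgebra K (ExelS G))
    (h : a ∈ LinearMap.range (LinearMap.toSpanSingleton
      (MonoidAlgebra K (ExelS G)) (MonoidAlgebra K (ExelS G)) (of K (ExelS G) (eTuple v)))) :
    x • DirectSum.lof (MonoidAlgebra K (ExelS G)) (Fin n → G)
      (fun w : Fin n → G => ↥(LinearMap.range (LinearMap.toSpanSingleton
        (MonoidAlgebra K (ExelS G)) (MonoidAlgebra K (ExelS G)) (of K (ExelS G) (eTuple w)))))
      v ⟨a, h⟩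
      = DirectSum.lof (MonoidAlgebra K (ExelS G)) (Fin n → G)
        (fun w : Fin n → G => ↥(LinearMap.range (LinearMap.toSpanSingleton
          (MonoidAlgebra K (ExelS G)) (MonoidAlgebra K (ExelS G)) (of K (ExelS G) (eTuple w)))))
        v ⟨x * a, Submodule.smul_mem _ x h⟩ := by
  rw [← map_smul]
  congr 1

lemma of_smul_bdryTarget (n : ℕ) (w : Fin (n + 1) → G) (u : ExelS G) :
    of K (ExelS G) u • bdryTarget K G n w
      = genMul K G n (Fin.tail w) (u * br (w 0))
        + ∑ j : Fin (n + 1), (-1 : ℤ) ^ ((j : ℕ) + 1) •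
            genMul K G n (Fin.contractNth j (· * ·) w) u := by
  unfold bdryTarget
  erw [smul_add, Finset.smul_sum]
  congr 1
  · erw [smul_lof_mk']
    exact lof_congr₂ K G rfl (by rw [← map_mul, ← map_mul, ← mul_assoc])
  · refine Finset.sum_congr rfl fun j _ => ?_
    erw [smul_zsmul_comm, smul_lof_mk']
    exact congrArg _ (lof_congr₂ K G rfl (by rw [← map_mul]))

end

section FinLemmas3

variable {G : Type*} [Group G] {n : ℕ}

lemma contractNth_zero_cons_mul (g : G) (v : Fin (n + 1) → G) :
    Fin.contractNth 0 (· * ·) (Fin.cons g v) = Fin.cons (g * v 0) (Fin.tail v) :=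
  contractNth_zero_cons _ g v

lemma contractNth_succ_cons_mul (j : Fin (n + 1)) (g : G) (v : Fin (n + 1) → G) :
    Fin.contractNth j.succ (· * ·) (Fin.cons g v) = Fin.cons g (Fin.contractNth j (· * ·) v) :=
  contractNth_succ_cons _ j g v

end FinLemmas3

noncomputable section

open ExelS MonoidAlgebra DirectSum

variable (K : Type*) [CommRing K] (G : Type*) [Group G] [DecidableEq G]

lemma hA_gen (m : ℕ) (v : Fin m → G) (s : ExelS G) :
    bdry K G m (sigmaMap K G m (gen K G m v s))
      = gen K G m v s + ∑ j : Fin (m + 1), (-1 : ℤ) ^ ((j : ℕ) + 1) •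
          genMul K G m (Fin.contractNth j (· * ·) (Fin.cons (s * eTuple v).elt v))
            ((s * eTuple v) * (s * eTuple v)⁻¹) := by
  have ht : Compat (s * eTuple v) v := compat_of_mul_eTuple s v
  rw [gen_eq_genOf, sigmaMap_genOf, sigmaF_eq_gen, gen_eq_genOf,
    show genOf K G (m + 1) (Fin.cons (s * eTuple v).elt v)
        (((s * eTuple v) * (s * eTuple v)⁻¹) * eTuple (Fin.cons (s * eTuple v).elt v))
        (by rw [mul_assoc, eTuple_idem])
      = genOf K G (m + 1) (Fin.cons (s * eTuple v).elt v)
        ((s * eTuple v) * (s * eTuple v)⁻¹) ht.invMul_mul_eTuple_cons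
      from genOf_congr K G ht.invMul_mul_eTuple_cons,
    bdry_genOf, of_smul_bdryTarget]
  congr 1
  rw [Fin.tail_cons, Fin.cons_zero]
  exact genOf_congr K G ht.decomp

lemma main3 (n : ℕ) (v : Fin (n + 1) → G) (s : ExelS G) :
    bdry K G (n + 1) (sigmaMap K G (n + 1) (gen K G (n + 1) v s))
      + sigmaMap K G n (bdry K G n (gen K G (n + 1) v s)) = gen K G (n + 1) v s := by
  have ht : Compat (s * eTuple v) v := compat_of_mul_eTuple s v
  have hB : sigmaMap K G n (bdry K G n (gen K G (n + 1) v s))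
      = genMul K G (n + 1) (Fin.contractNth 0 (· * ·) (Fin.cons (s * eTuple v).elt v))
          ((s * eTuple v) * (s * eTuple v)⁻¹)
        + ∑ j : Fin (n + 1), (-1 : ℤ) ^ ((j : ℕ) + 1) •
            genMul K G (n + 1) (Fin.contractNth j.succ (· * ·) (Fin.cons (s * eTuple v).elt v))
              ((s * eTuple v) * (s * eTuple v)⁻¹) := by
    rw [gen_eq_genOf, bdry_genOf, of_smul_bdryTarget, map_add, map_sum]
    congr 1
    · show sigmaMap K G n (genOf K G n (Fin.tail v)
          ((s * eTuple v) * br (v 0) * eTuple (Fin.tail v)) _) = _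
      rw [sigmaMap_genOf, sigmaF_eq_gen, elt_mul_br_eTuple, ht.aux_u1, ← genMul_eq_gen,
        ← contractNth_zero_cons_mul]
    · refine Finset.sum_congr rfl fun j _ => ?_
      rw [map_zsmul]
      refine congrArg _ ?_
      show sigmaMap K G n (genOf K G n (Fin.contractNth j (· * ·) v)
          ((s * eTuple v) * eTuple (Fin.contractNth j (· * ·) v)) _) = _
      rw [show genOf K G n (Fin.contractNth j (· * ·) v)
            ((s * eTuple v) * eTuple (Fin.contractNth j (· * ·) v))
            (by rw [mul_assoc, eTuple_idem])
          = genOf K G n (Fin.contractNth j (· * ·) v) (s * eTuple v)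
            (ht.mul_eTuple_contract j)
          from genOf_congr K G (ht.mul_eTuple_contract j),
        sigmaMap_genOf, sigmaF_eq_gen, ← genMul_eq_gen, ← contractNth_succ_cons_mul]
  rw [hA_gen, hB, Fin.sum_univ_succ]
  simp only [Fin.val_zero, zero_add, pow_one, neg_smul, one_smul, Fin.val_succ, pow_succ,
    mul_neg_one, neg_neg, Finset.sum_neg_distrib]
  abel

end

namespace ExelS

variable {G : Type*} [Group G] [DecidableEq G]

lemma eTuple_zero (v : Fin 0 → G) : eTuple v = 1 := by
  unfold eTuple
  rw [List.ofFn_zero, List.prod_nil]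

lemma mul_inv_idem (u : ExelS G) : (u * u⁻¹) * (u * u⁻¹) = u * u⁻¹ :=
  idem_of_elt_eq_one (by rw [mul_elt, inv_elt, mul_inv_cancel])

lemma idem_mul_inv (e : Idem G) : e.1 * e.1⁻¹ = e.1 := by
  rw [mul_inv_self]
  exact ExelS.ext rfl (elt_eq_one_of_idem e.2).symm

end ExelS

noncomputable section

open ExelS MonoidAlgebra DirectSum

variable (K : Type*) [CommRing K] (G : Type*) [Group G] [DecidableEq G]

lemma of_smul_oneB (u : ExelS G) :
    of K (ExelS G) u • oneB K G
      = Finsupp.single (⟨u * u⁻¹, mul_inv_idem u⟩ : Idem G) (1 : K) := by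
  rw [MonoidAlgebra.of_apply, single_smul_Bmod, one_smul]
  unfold oneB
  erw [Finsupp.mapDomain_single]
  congr 1
  refine Subtype.ext ?_
  show u * (1 : ExelS G) * u⁻¹ = u * u⁻¹
  rw [mul_one]

lemma sigmaNeg_single_one (e : Idem G) :
    sigmaNeg K G (Finsupp.single e (1 : K)) = gen K G 0 Fin.elim0 e.1 := by
  rw [sigmaNeg_apply, one_smul]
  rfl

lemma main1 (e : Idem G) (k : K) :
    bdry0 K G (sigmaNeg K G (Finsupp.single e k)) = Finsupp.single e k := by
  erw [sigmaNeg_apply]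
  erw [LinearMap.map_smul_of_tower (bdry0 K G) k]
  erw [bdry0_apply, eTuple_zero, map_one, mul_one,
    of_smul_oneB]
  rw [show (⟨e.1 * e.1⁻¹, mul_inv_idem e.1⟩ : Idem G) = e from Subtype.ext (idem_mul_inv e)]
  erw [Finsupp.smul_single', mul_one]
  rfl

lemma main2 (v : Fin 0 → G) (s : ExelS G) :
    bdry K G 0 (sigmaMap K G 0 (gen K G 0 v s))
      + sigmaNeg K G (bdry0 K G (gen K G 0 v s)) = gen K G 0 v s := by
  have hB : sigmaNeg K G (bdry0 K G (gen K G 0 v s))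
      = genMul K G 0 (Fin.contractNth 0 (· * ·) (Fin.cons (s * eTuple v).elt v))
          ((s * eTuple v) * (s * eTuple v)⁻¹) := by
    erw [gen_eq_genOf, bdry0_genOf, of_smul_oneB, sigmaNeg_single_one, ← genMul_eq_gen]
    rw [show (Fin.elim0 : Fin 0 → G)
        = Fin.contractNth 0 (· * ·) (Fin.cons (s * eTuple v).elt v)
      from funext fun i => i.elim0]
  rw [hA_gen, hB, Fin.sum_univ_one]
  simp only [Fin.val_zero, zero_add, pow_one, neg_smul, one_smul]
  abel

end

/-- The maps `σ_{-1}, σ_n` form a contracting homotopy for the complex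
`⋯ → P₁ → P₀ → B → 0`: `∂₀ ∘ σ₋₁ = id_B` and `∂_{n+1} ∘ σ_n + σ_{n−1} ∘ ∂_n = id_{P_n}`
for all `n ≥ 0`. -/
theorem sigma_is_contracting_homotopy :
    (∀ b : Bmod K G, bdry0 K G (sigmaNeg K G b) = b) ∧
    (∀ x : Pmod K G 0, bdry K G 0 (sigmaMap K G 0 x) + sigmaNeg K G (bdry0 K G x) = x) ∧
    (∀ (n : ℕ) (x : Pmod K G (n + 1)),
      bdry K G (n + 1) (sigmaMap K G (n + 1) x) + sigmaMap K G n (bdry K G n x) = x) := by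
  refine ⟨?_, ?_, ?_⟩
  · intro b
    induction b using Finsupp.induction_linear with
    | zero => exact (congrArg (bdry0 K G) (map_zero (sigmaNeg K G))).trans (map_zero _)
    | add f g hf hg => erw [map_add, map_add, hf, hg]; rfl
    | single e k => exact main1 K G e k
  · intro x
    have hx : x ∈ Submodule.span K
        (Set.range fun p : (Fin 0 → G) × ExelS G => gen K G 0 p.1 p.2) := by
      rw [gen_span]; exact Submodule.mem_top
    induction hx using Submodule.span_induction with
    | mem y hy =>
      obtain ⟨⟨v, s⟩, rfl⟩ := hy
      exact main2 K G v s
    | zero => rw [map_zero, map_zero, map_zero, map_zero, add_zero]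
    | add a b _ _ ha hb =>
      rw [map_add, map_add, map_add, map_add, add_add_add_comm, ha, hb]
    | smul k a _ ha =>
      rw [map_smul, LinearMap.map_smul_of_tower, LinearMap.map_smul_of_tower, map_smul,
        ← smul_add, ha]
  · intro n x
    have hx : x ∈ Submodule.span K
        (Set.range fun p : (Fin (n + 1) → G) × ExelS G => gen K G (n + 1) p.1 p.2) := by
      rw [gen_span]; exact Submodule.mem_top
    induction hx using Submodule.span_induction with
    | mem y hy =>
      obtain ⟨⟨v, s⟩, rfl⟩ := hy
      exact main3 K G n v s
    | zero => rw [map_zero, map_zero, map_zero, map_zero, add_zero]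
    | add a b _ _ ha hb =>
      rw [map_add, map_add, map_add, map_add, add_add_add_comm, ha, hb]
    | smul k a _ ha =>
      rw [map_smul, LinearMap.map_smul_of_tower, LinearMap.map_smul_of_tower, map_smul,
        ← smul_add, ha]

end
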